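/- Let X be a nonseparable real Banach space and let Γ be a set of cardinality ℵ₁. If there is a bounded linear operator T : X → c₀(Γ) whose range is nonseparable, then cov(X) = ℵ₁. -/

import Mathlib

open Cardinal Set

universe u v

noncomputable section

/-- A hyperplane of a normed space: the kernel of a nonzero continuous linear functional. -/
def IsHyperplane {X : Type u} [NormedAddCommGroup X] [NormedSpace ℝ X] (H : Set X) : Prop :=
  ∃ f : X →L[ℝ] ℝ, f ≠ 0 ∧ H = {x | f x = 0}

/-- Member of the σ-ideal generated by hyperplanes: covered by countably many hyperplanes. -/
def InHyperplaneIdeal {X : Type u} [NormedAddCommGroup X] [NormedSpace ℝ X] (Y : Set X) : Prop :=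
  ∃ F : Set (Set X), F.Countable ∧ (∀ H ∈ F, IsHyperplane H) ∧ Y ⊆ ⋃₀ F

/-- Additivity of the hyperplane σ-ideal. -/
def addH (X : Type u) [NormedAddCommGroup X] [NormedSpace ℝ X] : Cardinal.{u} :=
  sInf {c | ∃ F : Set (Set X), (∀ A ∈ F, InHyperplaneIdeal A) ∧
    ¬ InHyperplaneIdeal (⋃₀ F) ∧ #F = c}

/-- Covering number of the hyperplane σ-ideal. -/
def covH (X : Type u) [NormedAddCommGroup X] [NormedSpace ℝ X] : Cardinal.{u} :=
  sInf {c | ∃ F : Set (Set X), (∀ A ∈ F, InHyperplaneIdeal A) ∧ ⋃₀ F = Set.univ ∧ #F = c}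

/-- Uniformity of the hyperplane σ-ideal. -/
def nonH (X : Type u) [NormedAddCommGroup X] [NormedSpace ℝ X] : Cardinal.{u} :=
  sInf {c | ∃ Y : Set X, ¬ InHyperplaneIdeal Y ∧ #Y = c}

/-- Cofinality of the hyperplane σ-ideal. -/
def cofH (X : Type u) [NormedAddCommGroup X] [NormedSpace ℝ X] : Cardinal.{u} :=
  sInf {c | ∃ F : Set (Set X), (∀ A ∈ F, InHyperplaneIdeal A) ∧
    (∀ Y : Set X, InHyperplaneIdeal Y → ∃ A ∈ F, Y ⊆ A) ∧ #F = c}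

/-- Density of a topological space: least cardinality of a dense subset. -/
def densH (X : Type u) [TopologicalSpace X] : Cardinal.{u} :=
  sInf {c | ∃ D : Set X, Dense D ∧ #D = c}

/-- `cf([κ]^ω)`: least cardinality of a cofinal family of countable subsets of κ. -/
def cfCtblSubsets (κ : Cardinal.{u}) : Cardinal.{u} :=
  sInf {c | ∃ F : Set (Set κ.out), (∀ S ∈ F, S.Countable) ∧
    (∀ S : Set κ.out, S.Countable → ∃ T ∈ F, S ⊆ T) ∧ #F = c}

/-- A compact space has small diagonal. -/
def HasSmallDiagonal (K : Type u) [TopologicalSpace K] : Prop :=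
  ∀ A : Set (K × K), #A = Cardinal.aleph 1 → A ∩ Set.diagonal K = ∅ →
    ∃ B ⊆ A, ¬ B.Countable ∧ closure B ∩ Set.diagonal K = ∅

/-- A topological space is scattered. -/
def IsScattered (K : Type u) [TopologicalSpace K] : Prop :=
  ∀ S : Set K, S.Nonempty → ∃ x ∈ S, ∃ U : Set K, IsOpen U ∧ U ∩ S = {x}


section Aux

variable {X : Type u} [NormedAddCommGroup X] [NormedSpace ℝ X]

lemma interior_hyperplane_eq_empty {H : Set X} (h : IsHyperplane H) : interior H = ∅ := by
  obtain ⟨f, hf, rfl⟩ := h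
  by_contra hne
  obtain ⟨x, hx⟩ := Set.nonempty_iff_ne_empty.mpr hne
  obtain ⟨ε, hε, hball⟩ := Metric.isOpen_iff.mp isOpen_interior x hx
  apply hf
  ext y
  simp only [ContinuousLinearMap.zero_apply]
  by_cases hy : y = 0
  · simp [hy]
  have hny : (0:ℝ) < ‖y‖ := norm_pos_iff.mpr hy
  have hx0 : f x = 0 := by have := interior_subset hx; simpa using this
  have ht : 0 < ε / (2 * ‖y‖) := by positivity
  have hmem : x + (ε / (2 * ‖y‖)) • y ∈ Metric.ball x ε := by
    rw [Metric.mem_ball, dist_eq_norm]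
    have h1 : x + (ε / (2 * ‖y‖)) • y - x = (ε / (2 * ‖y‖)) • y := by ring_nf; abel
    rw [h1, norm_smul, Real.norm_eq_abs, abs_of_pos ht]
    have : ε / (2 * ‖y‖) * ‖y‖ = ε / 2 := by field_simp
    rw [this]; linarith
  have hmem2 : f (x + (ε / (2 * ‖y‖)) • y) = 0 := by
    have := interior_subset (hball hmem); simpa using this
  rw [map_add, map_smul, hx0, zero_add, smul_eq_mul] at hmem2
  have := mul_eq_zero.mp hmem2
  rcases this with h | h
  · exact absurd h ht.ne'
  · exact h

lemma inIdeal_sUnion {F : Set (Set X)} (hc : F.Countable) (h : ∀ A ∈ F, InHyperplaneIdeal A) :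
    InHyperplaneIdeal (⋃₀ F) := by
  choose G hGc hGh hGs using h
  have := hc.to_subtype
  refine ⟨⋃ A : F, G A A.2, Set.countable_iUnion fun A => hGc A A.2, ?_, ?_⟩
  · intro H hH
    obtain ⟨A, hA⟩ := Set.mem_iUnion.mp hH
    exact hGh A A.2 H hA
  · rintro x ⟨A, hA, hxA⟩
    obtain ⟨H, hH, hxH⟩ := hGs A hA hxA
    exact ⟨H, Set.mem_iUnion.mpr ⟨⟨A, hA⟩, hH⟩, hxH⟩

lemma not_inIdeal_univ [CompleteSpace X] : ¬ InHyperplaneIdeal (Set.univ : Set X) := by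
  rintro ⟨G, hGc, hGh, hGu⟩
  have : Countable ↥G := hGc.to_subtype
  have hU : ⋃ H : G, (H : Set X) = Set.univ := by
    rw [← Set.sUnion_eq_iUnion]
    exact Set.univ_subset_iff.mp hGu
  obtain ⟨⟨H, hH⟩, hne⟩ := nonempty_interior_of_iUnion_of_closed
    (f := fun H : G => (H : Set X)) (fun H => by
      obtain ⟨f, _, hfe⟩ := hGh H H.2
      show IsClosed (H : Set X)
      rw [hfe]
      exact isClosed_eq f.continuous continuous_const) hU
  rw [interior_hyperplane_eq_empty (hGh H hH)] at hne
  exact Set.not_nonempty_empty hne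

lemma aleph_one_le_of_cover [CompleteSpace X] {F : Set (Set X)}
    (hall : ∀ A ∈ F, InHyperplaneIdeal A) (hu : ⋃₀ F = Set.univ) : ℵ₁ ≤ #F := by
  by_contra hlt
  push_neg at hlt
  have hc : F.Countable := (Cardinal.countable_iff_lt_aleph_one F).mpr hlt
  exact not_inIdeal_univ (hu ▸ inIdeal_sUnion hc hall)

end Aux

section C0

variable {Γ : Type v} [TopologicalSpace Γ] [DiscreteTopology Γ]

def evalAt (γ : Γ) : ZeroAtInftyContinuousMap Γ ℝ →L[ℝ] ℝ :=
  LinearMap.mkContinuous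
    { toFun := fun g => g γ
      map_add' := fun g h => rfl
      map_smul' := fun c g => rfl }
    1 (fun g => by
      rw [one_mul]
      calc ‖g γ‖ ≤ ‖g.toBCF‖ := g.toBCF.norm_coe_le_norm γ
        _ = ‖g‖ := ZeroAtInftyContinuousMap.norm_toBCF_eq_norm)

@[simp] lemma evalAt_apply (γ : Γ) (g : ZeroAtInftyContinuousMap Γ ℝ) : evalAt γ g = g γ := rfl

lemma finite_large (g : ZeroAtInftyContinuousMap Γ ℝ) {ε : ℝ} (hε : 0 < ε) :
    {γ | ε ≤ |g γ|}.Finite := by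
  have h := g.zero_at_infty'
  rw [Filter.cocompact_eq_cofinite Γ] at h
  have h2 : ∀ᶠ γ in Filter.cofinite, dist (g γ) 0 < ε := (Metric.tendsto_nhds.mp h) ε hε
  refine (Filter.eventually_cofinite.mp h2).subset ?_
  intro γ hγ
  simp only [Set.mem_setOf_eq, dist_zero_right, Real.norm_eq_abs, not_lt]
  exact hγ

lemma support_countable (g : ZeroAtInftyContinuousMap Γ ℝ) : {γ | g γ ≠ 0}.Countable := by
  have hsub : {γ | g γ ≠ 0} ⊆ ⋃ n : ℕ, {γ | 1 / ((n : ℝ) + 1) ≤ |g γ|} := by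
    intro γ hγ
    obtain ⟨n, hn⟩ := exists_nat_one_div_lt (abs_pos.mpr hγ)
    exact Set.mem_iUnion.mpr ⟨n, hn.le⟩
  exact (Set.countable_iUnion fun n =>
    (finite_large g (by positivity)).countable).mono hsub

lemma separable_of_countable_support {S : Set Γ} (hS : S.Countable) :
    TopologicalSpace.IsSeparable {g : ZeroAtInftyContinuousMap Γ ℝ | ∀ γ ∉ S, g γ = 0} := by
  classical
  have : Countable ↥S := hS.to_subtype
  let Φ : (↥S →₀ ℚ) → ZeroAtInftyContinuousMap Γ ℝ := fun q =>
    { toFun := fun γ => if h : γ ∈ S then ((q ⟨γ, h⟩ : ℚ) : ℝ) else 0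
      continuous_toFun := continuous_of_discreteTopology
      zero_at_infty' := by
        rw [Filter.cocompact_eq_cofinite Γ]
        have hfin : {γ : Γ | (if h : γ ∈ S then ((q ⟨γ, h⟩ : ℚ) : ℝ) else 0) ≠ 0}.Finite := by
          apply (q.support.finite_toSet.image Subtype.val).subset
          intro γ hγ
          simp only [Set.mem_setOf_eq] at hγ
          by_cases h : γ ∈ S
          · rw [dif_pos h] at hγ
            exact ⟨⟨γ, h⟩, by simpa using hγ, rfl⟩
          · rw [dif_neg h] at hγ
            exact absurd rfl hγ
        refine Filter.Tendsto.congr' ?_ tendsto_const_nhds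
        filter_upwards [hfin.eventually_cofinite_notMem] with γ hγ
        simp only [Set.mem_setOf_eq, not_not] at hγ
        exact hγ.symm }
  have hΦ : ∀ q γ, Φ q γ = if h : γ ∈ S then ((q ⟨γ, h⟩ : ℚ) : ℝ) else 0 := fun _ _ => rfl
  refine ⟨Set.range Φ, Set.countable_range Φ, ?_⟩
  intro g hg
  rw [Metric.mem_closure_iff]
  intro ε hε
  have hε2 : 0 < ε / 2 := by linarith
  have hF₀ : {γ | ε / 2 ≤ |g γ|}.Finite := finite_large g hε2
  choose r hr using fun s : ↥S => exists_rat_near (g ↑s) hε2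
  have hpre : {s : ↥S | (s : Γ) ∈ {γ | ε / 2 ≤ |g γ|}}.Finite :=
    hF₀.preimage (Set.injOn_of_injective Subtype.val_injective)
  set q : ↥S →₀ ℚ := Finsupp.onFinset hpre.toFinset
    (fun s => if (s : Γ) ∈ {γ | ε / 2 ≤ |g γ|} then r s else 0)
    (fun s hs => by
      rw [Set.Finite.mem_toFinset]
      by_contra hh
      simp only [Set.mem_setOf_eq] at hh hs
      rw [if_neg hh] at hs
      exact hs rfl) with hq
  refine ⟨Φ q, Set.mem_range_self q, ?_⟩
  have hd : dist g (Φ q) ≤ ε / 2 := by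
    rw [dist_eq_norm, ← ZeroAtInftyContinuousMap.norm_toBCF_eq_norm]
    refine (BoundedContinuousFunction.norm_le hε2.le).mpr fun γ => ?_
    have hcoe : (g - Φ q).toBCF γ = g γ - Φ q γ := rfl
    rw [hcoe, Real.norm_eq_abs]
    by_cases hγS : γ ∈ S
    · have hΦv : Φ q γ = ((q ⟨γ, hγS⟩ : ℚ) : ℝ) := by rw [hΦ, dif_pos hγS]
      have hqv : q ⟨γ, hγS⟩ = if γ ∈ {γ | ε / 2 ≤ |g γ|} then r ⟨γ, hγS⟩ else 0 :=
        Finsupp.onFinset_apply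
      by_cases hγF : γ ∈ {γ | ε / 2 ≤ |g γ|}
      · rw [hΦv, hqv, if_pos hγF]
        exact (hr ⟨γ, hγS⟩).le
      · rw [hΦv, hqv, if_neg hγF]
        push_cast
        rw [sub_zero]
        exact (not_le.mp hγF).le
    · have hΦv : Φ q γ = 0 := by rw [hΦ, dif_neg hγS]
      rw [hΦv, hg γ hγS, sub_zero, abs_zero]
      exact hε2.le
  calc dist g (Φ q) ≤ ε / 2 := hd
    _ < ε := by linarith

end C0

/-- a nonseparable Banach space with a bounded operator into c₀(Γ), |Γ| = ℵ₁,
with nonseparable range satisfies cov(X) = ℵ₁. -/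
theorem stmt11 (X : Type u) [NormedAddCommGroup X] [NormedSpace ℝ X] [CompleteSpace X]
    (hsep : ¬ TopologicalSpace.SeparableSpace X)
    (Γ : Type v) [TopologicalSpace Γ] [DiscreteTopology Γ] (hΓ : #Γ = Cardinal.aleph 1)
    (T : X →L[ℝ] ZeroAtInftyContinuousMap Γ ℝ)
    (hns : ¬ TopologicalSpace.IsSeparable (Set.range fun x => T x)) :
    covH X = Cardinal.aleph 1 := by
  classical
  set e : Γ → (X →L[ℝ] ℝ) := fun γ => (evalAt γ).comp T with he
  set S : Set Γ := {γ | e γ ≠ 0} with hSdef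
  have hSun : ¬ S.Countable := by
    intro hSc
    apply hns
    refine (separable_of_countable_support hSc).mono ?_
    rintro _ ⟨x, rfl⟩
    intro γ hγ
    have h0 : e γ = 0 := not_not.mp hγ
    have h1 := ContinuousLinearMap.ext_iff.mp h0 x
    exact h1
  have hcover : ∀ x : X, ∃ γ ∈ S, e γ x = 0 := by
    intro x
    by_contra h
    push_neg at h
    apply hSun
    refine (support_countable (T x)).mono ?_
    intro γ hγ
    exact h γ hγ
  set F : Set (Set X) := (fun γ => {x : X | e γ x = 0}) '' S with hF
  have hFh : ∀ A ∈ F, InHyperplaneIdeal A := by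
    rintro A ⟨γ, hγ, rfl⟩
    refine ⟨{{x : X | e γ x = 0}}, Set.countable_singleton _, ?_, ?_⟩
    · intro H hH
      rw [Set.mem_singleton_iff] at hH
      exact hH ▸ ⟨e γ, hγ, rfl⟩
    · exact Set.subset_sUnion_of_mem rfl
  have hFu : ⋃₀ F = Set.univ := by
    apply Set.eq_univ_of_forall
    intro x
    obtain ⟨γ, hγ, h0⟩ := hcover x
    exact ⟨{x : X | e γ x = 0}, ⟨γ, hγ, rfl⟩, h0⟩
  have hlow : ℵ₁ ≤ #F := aleph_one_le_of_cover hFh hFu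
  have hup : #F ≤ ℵ₁ := by
    have h2 : #↥S ≤ (ℵ₁ : Cardinal.{v}) := hΓ ▸ Cardinal.mk_set_le S
    have h3 : Cardinal.lift.{v} #F ≤ Cardinal.lift.{v} (ℵ₁ : Cardinal.{u}) := by
      calc Cardinal.lift.{v} #F ≤ Cardinal.lift.{u} #↥S := Cardinal.mk_image_le_lift
        _ ≤ Cardinal.lift.{u} (ℵ₁ : Cardinal.{v}) := Cardinal.lift_le.mpr h2
        _ = Cardinal.lift.{v} (ℵ₁ : Cardinal.{u}) := by
          rw [Cardinal.lift_aleph, Cardinal.lift_aleph]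
          simp
    exact Cardinal.lift_le.mp h3
  have hmem : Cardinal.aleph 1 ∈ {c | ∃ F : Set (Set X),
      (∀ A ∈ F, InHyperplaneIdeal A) ∧ ⋃₀ F = Set.univ ∧ #F = c} :=
    ⟨F, hFh, hFu, le_antisymm hup hlow⟩
  refine le_antisymm (csInf_le' hmem) (le_csInf ⟨_, hmem⟩ ?_)
  rintro c ⟨F', h1, h2, rfl⟩
  exact aleph_one_le_of_cover h1 h2

end
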